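/- Let P(z) be a matrix polynomial that is unitary for all z on the unit circle. Then P(z) can be written as a product V_0 · Π_{k=1}^{L} (Π_k z + (I − Π_k)), where V_0 is a constant unitary matrix and each Π_k is an orthogonal projection, with L equal to the degree of P. -/

import Mathlib

open Matrix Complex


noncomputable section
variable {N : ℕ}

abbrev Mat (N : ℕ) := Matrix (Fin N) (Fin N) ℂ

lemma toEuclideanLin_mul (A B : Mat N) :
    Matrix.toEuclideanLin (A * B) =
      (Matrix.toEuclideanLin A).comp (Matrix.toEuclideanLin B) := by
  simp [Matrix.toEuclideanLin_eq_toLin, Matrix.toLin_mul _ (PiLp.basisFun 2 ℂ (Fin N)) _]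

def projMat (M : Mat N) : Mat N :=
  Matrix.toEuclideanLin.symm
    (((LinearMap.range (Matrix.toEuclideanLin M)).subtypeL ∘L
      Submodule.orthogonalProjectionOnto (LinearMap.range (Matrix.toEuclideanLin M))).toLinearMap)

lemma toEuclideanLin_projMat (M : Mat N) :
    Matrix.toEuclideanLin (projMat M) =
      ((LinearMap.range (Matrix.toEuclideanLin M)).subtypeL ∘L
        Submodule.orthogonalProjectionOnto (LinearMap.range (Matrix.toEuclideanLin M))).toLinearMap := by
  simp [projMat]

lemma projMat_hermitian (M : Mat N) : (projMat M)ᴴ = projMat M := by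
  have : (projMat M).IsHermitian := by
    rw [Matrix.isHermitian_iff_isSymmetric, toEuclideanLin_projMat]
    exact Submodule.starProjection_isSymmetric _
  exact this

lemma projMat_idem (M : Mat N) : projMat M * projMat M = projMat M := by
  apply Matrix.toEuclideanLin.injective
  rw [toEuclideanLin_mul, toEuclideanLin_projMat]
  ext x
  simp only [LinearMap.comp_apply, ContinuousLinearMap.coe_coe,
    ContinuousLinearMap.comp_apply, Submodule.subtypeL_apply]
  rw [← Submodule.starProjection_apply, ← Submodule.starProjection_apply,
    Submodule.starProjection_eq_self_iff.mpr (Submodule.starProjection_apply_mem _ _)]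

lemma projMat_mul_self (M : Mat N) : projMat M * M = M := by
  apply Matrix.toEuclideanLin.injective
  rw [toEuclideanLin_mul, toEuclideanLin_projMat]
  ext x
  simp only [LinearMap.comp_apply, ContinuousLinearMap.coe_coe,
    ContinuousLinearMap.comp_apply, Submodule.subtypeL_apply]
  rw [← Submodule.starProjection_apply, Submodule.starProjection_eq_self_iff.mpr (LinearMap.mem_range_self (Matrix.toEuclideanLin M) x)]

lemma projMat_mul_eq_zero (M C : Mat N) (h : Mᴴ * C = 0) : projMat M * C = 0 := by
  apply Matrix.toEuclideanLin.injective
  rw [toEuclideanLin_mul, toEuclideanLin_projMat]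
  ext x
  simp only [LinearMap.comp_apply, ContinuousLinearMap.coe_coe,
    ContinuousLinearMap.comp_apply, Submodule.subtypeL_apply, map_zero, LinearMap.zero_apply]
  have hmem : Matrix.toEuclideanLin C x ∈ (LinearMap.range (Matrix.toEuclideanLin M))ᗮ := by
    rw [Submodule.mem_orthogonal]
    rintro u ⟨w, rfl⟩
    have : inner ℂ (Matrix.toEuclideanLin M w) (Matrix.toEuclideanLin C x) =
        inner ℂ w (Matrix.toEuclideanLin (Mᴴ * C) x) := by
      rw [toEuclideanLin_mul, LinearMap.comp_apply,
        Matrix.toEuclideanLin_conjTranspose_eq_adjoint, LinearMap.adjoint_inner_right]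
    rw [this, h]
    simp
  rw [Submodule.orthogonalProjectionOnto_apply_of_mem_orthogonal hmem]
  simp
end
section
open Polynomial

lemma circle_infinite : {z : ℂ | ‖z‖ = 1}.Infinite := by
  apply Set.infinite_of_injective_forall_mem
    (f := fun t : ℝ => (1 - t * I) / (1 + t * I))
  · intro s t hst
    have hs : (1 : ℂ) + s * I ≠ 0 := by
      intro h
      have := congrArg Complex.re h
      simp at this
    have ht : (1 : ℂ) + t * I ≠ 0 := by
      intro h
      have := congrArg Complex.re h
      simp at this
    beta_reduce at hst
    rw [div_eq_div_iff hs ht] at hst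
    have h3 : ((t : ℂ) - s) * (2 * I) = 0 := by linear_combination hst
    rcases mul_eq_zero.mp h3 with h | h
    · have h4 : (t : ℂ) = s := sub_eq_zero.mp h
      exact_mod_cast h4.symm
    · exact absurd h (by simp [Complex.I_ne_zero])
  · intro t
    have ht : (1 : ℂ) + t * I ≠ 0 := by
      intro h
      have := congrArg Complex.re h
      simp at this
    have hconj : (starRingEnd ℂ) (1 + t * I) = 1 - t * I := by
      simp [Complex.conj_ofReal]
      ring
    simp only [Set.mem_setOf_eq, norm_div]
    rw [← hconj, Complex.norm_conj, div_self]
    simpa using ht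

lemma lead_coeff {N D : ℕ} (P : Fin (D + 2) → Matrix (Fin N) (Fin N) ℂ)
    (hunit : ∀ z : ℂ, ‖z‖ = 1 →
      (∑ l : Fin (D+2), z ^ (l:ℕ) • P l)ᴴ * (∑ l : Fin (D+2), z ^ (l:ℕ) • P l) = 1) :
    P (Fin.last (D+1)) * (P 0)ᴴ = 0 := by
  have h2 : ∀ z : ℂ, ‖z‖ = 1 →
      (∑ l : Fin (D+2), z ^ (l:ℕ) • P l) * (∑ l : Fin (D+2), z ^ (l:ℕ) • P l)ᴴ = 1 :=
    fun z hz => mul_eq_one_comm.mp (hunit z hz)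
  ext i j
  set p : Polynomial ℂ :=
    (∑ l : Fin (D+2), ∑ m : Fin (D+2),
      Polynomial.C ((P l * (P m)ᴴ) i j) * Polynomial.X ^ ((l:ℕ) + (D + 1 - (m:ℕ))))
    - Polynomial.C ((1 : Matrix (Fin N) (Fin N) ℂ) i j) * Polynomial.X ^ (D+1) with hp
  have hroot : ∀ z : ℂ, ‖z‖ = 1 → p.eval z = 0 := by
    intro z hz
    have hz0 : z ≠ 0 := by
      intro h; rw [h] at hz; simp at hz
    have hcz : z * (starRingEnd ℂ) z = 1 := by
      rw [Complex.mul_conj]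
      norm_cast
      rw [Complex.normSq_eq_norm_sq, hz]; norm_num
    have key : ∀ (l m : ℕ), m ≤ D+1 →
        z ^ (l + (D+1 - m)) = z^(D+1) * (z^l * ((starRingEnd ℂ) z)^m) := by
      intro l m hm
      apply mul_right_cancel₀ (pow_ne_zero m hz0)
      rw [← pow_add]
      have he : l + (D+1 - m) + m = (D+1) + l := by omega
      rw [he, pow_add]
      calc z ^ (D+1) * z ^ l
          = z ^ (D+1) * z ^ l * 1 := by ring
        _ = z ^ (D+1) * z ^ l * (z * (starRingEnd ℂ) z)^m := by rw [hcz]; ring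
        _ = z ^ (D + 1) * (z ^ l * (starRingEnd ℂ) z ^ m) * z ^ m := by
            rw [mul_pow]; ring
    have hSS : (∑ l : Fin (D+2), ∑ m : Fin (D+2),
        ((P l * (P m)ᴴ) i j) * (z^(l:ℕ) * ((starRingEnd ℂ) z)^(m:ℕ)))
        = (1 : Matrix (Fin N) (Fin N) ℂ) i j := by
      have := h2 z hz
      calc ∑ l : Fin (D+2), ∑ m : Fin (D+2),
            ((P l * (P m)ᴴ) i j) * (z^(l:ℕ) * ((starRingEnd ℂ) z)^(m:ℕ))
          = ((∑ l : Fin (D+2), z ^ (l:ℕ) • P l) *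
              (∑ l : Fin (D+2), z ^ (l:ℕ) • P l)ᴴ) i j := by
            rw [Matrix.conjTranspose_sum]
            simp only [Matrix.conjTranspose_smul]
            rw [Finset.sum_mul_sum]
            rw [Matrix.sum_apply]
            refine Finset.sum_congr rfl fun l _ => ?_
            rw [Matrix.sum_apply]
            refine Finset.sum_congr rfl fun m _ => ?_
            simp [Matrix.smul_mul, Matrix.mul_smul, Complex.star_def, ← map_pow]
            ring
        _ = (1 : Matrix (Fin N) (Fin N) ℂ) i j := by rw [this]
    simp only [hp, Polynomial.eval_sub, Polynomial.eval_finset_sum, Polynomial.eval_mul,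
      Polynomial.eval_C, Polynomial.eval_pow, Polynomial.eval_X]
    have : ∀ l : Fin (D+2), ∀ m : Fin (D+2),
        (P l * (P m)ᴴ) i j * z ^ ((l:ℕ) + (D + 1 - (m:ℕ)))
        = z^(D+1) * ((P l * (P m)ᴴ) i j * (z^(l:ℕ) * ((starRingEnd ℂ) z)^(m:ℕ))) := by
      intro l m
      rw [key (l:ℕ) (m:ℕ) (by omega)]
      ring
    calc (∑ l : Fin (D+2), ∑ m : Fin (D+2),
            (P l * (P m)ᴴ) i j * z ^ ((l:ℕ) + (D + 1 - (m:ℕ))))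
          - (1 : Matrix (Fin N) (Fin N) ℂ) i j * z ^ (D+1)
        = z^(D+1) * ((∑ l : Fin (D+2), ∑ m : Fin (D+2),
            ((P l * (P m)ᴴ) i j) * (z^(l:ℕ) * ((starRingEnd ℂ) z)^(m:ℕ)))
            - (1 : Matrix (Fin N) (Fin N) ℂ) i j) := by
          rw [mul_sub]
          congr 1
          · rw [Finset.mul_sum]
            refine Finset.sum_congr rfl fun l _ => ?_
            rw [Finset.mul_sum]
            exact Finset.sum_congr rfl fun m _ => this l m
          · ring
      _ = 0 := by rw [hSS]; ring
  have hp0 : p = 0 := by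
    apply Polynomial.eq_zero_of_infinite_isRoot
    apply circle_infinite.mono
    intro z hz
    exact hroot z hz
  have hc := congrArg (fun q => Polynomial.coeff q (2*D+2)) hp0
  simp only [hp, Polynomial.coeff_sub, Polynomial.finset_sum_coeff, Polynomial.coeff_C_mul,
    Polynomial.coeff_X_pow, Polynomial.coeff_zero] at hc
  have hlast : ∑ l : Fin (D+2), ∑ m : Fin (D+2),
      (P l * (P m)ᴴ) i j * (if (2*D+2 : ℕ) = (l:ℕ) + (D + 1 - (m:ℕ)) then (1:ℂ) else 0)
      = (P (Fin.last (D+1)) * (P 0)ᴴ) i j := by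
    rw [Finset.sum_eq_single (Fin.last (D+1))]
    · rw [Finset.sum_eq_single (0 : Fin (D+2))]
      · rw [if_pos (by simp only [Fin.val_last, Fin.val_zero]; omega), mul_one]
      · intro m _ hm
        have hmv : (m:ℕ) ≠ 0 := fun h => hm (Fin.ext h)
        have hcond : ¬ ((2*D+2 : ℕ) = ((Fin.last (D+1) : Fin (D+2)):ℕ) + (D + 1 - (m:ℕ))) := by
          have := Fin.is_le m
          simp only [Fin.val_last]
          omega
        rw [if_neg hcond, mul_zero]
      · intro h; exact absurd (Finset.mem_univ _) h
    · intro l _ hl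
      have hlv : (l:ℕ) ≠ D+1 := fun h => hl (Fin.ext (by simp [h]))
      apply Finset.sum_eq_zero
      intro m _
      have hle := Fin.is_le l
      have hme := Fin.is_le m
      have hcond : ¬ ((2*D+2 : ℕ) = (l:ℕ) + (D + 1 - (m:ℕ))) := by omega
      rw [if_neg hcond, mul_zero]
    · intro h; exact absurd (Finset.mem_univ _) h
  have hne : ¬ ((2*D+2 : ℕ) = D + 1) := by omega
  rw [if_neg hne] at hc
  simp only [mul_zero, sub_zero] at hc
  rw [hlast] at hc
  simpa using hc
end

section

theorem main_induction : ∀ (L N : ℕ) (P : Fin (L + 1) → Matrix (Fin N) (Fin N) ℂ),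
    (∀ z : ℂ, ‖z‖ = 1 →
      (∑ l : Fin (L + 1), z ^ (l : ℕ) • P l)ᴴ * (∑ l : Fin (L + 1), z ^ (l : ℕ) • P l) = 1) →
    ∃ (V₀ : Matrix (Fin N) (Fin N) ℂ) (Pi : Fin L → Matrix (Fin N) (Fin N) ℂ),
      V₀ ∈ Matrix.unitaryGroup (Fin N) ℂ ∧
      (∀ k, (Pi k)ᴴ = Pi k ∧ Pi k * Pi k = Pi k) ∧
      ∀ z : ℂ, ‖z‖ = 1 →
        ∑ l : Fin (L + 1), z ^ (l : ℕ) • P l =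
          V₀ * (List.ofFn (fun k : Fin L => z • Pi k + (1 - Pi k))).prod := by
  intro L
  induction L with
  | zero =>
    intro N P hunit
    refine ⟨P 0, Fin.elim0, ?_, fun k => k.elim0, ?_⟩
    · rw [Matrix.mem_unitaryGroup_iff', Matrix.star_eq_conjTranspose]
      have := hunit 1 (by simp)
      simpa using this
    · intro z hz
      simp
  | succ D IH =>
    intro N P hunit
    set A := P (Fin.last (D + 1)) with hA
    have hPA : A * (P 0)ᴴ = 0 := lead_coeff P hunit
    set Pr : Matrix (Fin N) (Fin N) ℂ := projMat (Aᴴ) with hPr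
    have hPrH : Prᴴ = Pr := projMat_hermitian _
    have hPrI : Pr * Pr = Pr := projMat_idem _
    have hAPr' : A * Pr = A := by
      have h1 : Pr * Aᴴ = Aᴴ := projMat_mul_self _
      have := congrArg Matrix.conjTranspose h1
      rwa [Matrix.conjTranspose_mul, Matrix.conjTranspose_conjTranspose, hPrH] at this
    have hP0Pr : P 0 * Pr = 0 := by
      have h1 : Pr * (P 0)ᴴ = 0 := by
        apply projMat_mul_eq_zero
        rwa [Matrix.conjTranspose_conjTranspose]
      have := congrArg Matrix.conjTranspose h1
      rwa [Matrix.conjTranspose_mul, Matrix.conjTranspose_conjTranspose, hPrH,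
        Matrix.conjTranspose_zero] at this
    have e1 : Pr * (1 - Pr) = 0 := by rw [mul_sub, mul_one, hPrI, sub_self]
    have e2 : (1 - Pr) * Pr = 0 := by rw [sub_mul, one_mul, hPrI, sub_self]
    have e3 : (1 - Pr) * (1 - Pr) = 1 - Pr := by rw [mul_sub, mul_one, e2, sub_zero]
    set Q : Fin (D + 1) → Matrix (Fin N) (Fin N) ℂ :=
      fun l => P l.succ * Pr + P l.castSucc * (1 - Pr) with hQ
    have hQexp : ∀ z : ℂ, ∀ l : Fin (D + 1),
        Q l * (z • Pr + (1 - Pr)) = z • (P l.succ * Pr) + P l.castSucc * (1 - Pr) := by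
      intro z l
      rw [hQ]
      simp only [add_mul, mul_add, Matrix.mul_smul, mul_assoc, hPrI, e1, e2, e3,
        mul_zero, add_zero, smul_zero, zero_add]
    have hfact : ∀ z : ℂ,
        (∑ l : Fin (D + 1), z ^ (l : ℕ) • Q l) * (z • Pr + (1 - Pr)) =
          ∑ l : Fin (D + 2), z ^ (l : ℕ) • P l := by
      intro z
      rw [Finset.sum_mul]
      have hterm : ∀ l : Fin (D + 1),
          (z ^ (l : ℕ) • Q l) * (z • Pr + (1 - Pr)) =
            z ^ ((l : ℕ) + 1) • (P l.succ * Pr) + z ^ (l : ℕ) • (P l.castSucc * (1 - Pr)) := by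
        intro l
        rw [Matrix.smul_mul, hQexp z l, smul_add, smul_smul, ← pow_succ]
      rw [Finset.sum_congr rfl (fun l _ => hterm l), Finset.sum_add_distrib]
      have h1 : ∑ l : Fin (D + 1), z ^ ((l : ℕ) + 1) • (P l.succ * Pr) =
          ∑ m : Fin (D + 2), z ^ (m : ℕ) • (P m * Pr) := by
        rw [Fin.sum_univ_succ (f := fun m : Fin (D + 2) => z ^ (m : ℕ) • (P m * Pr))]
        simp [hP0Pr, Fin.val_succ]
      have hlast0 : P (Fin.last (D + 1)) * (1 - Pr) = 0 := by
        rw [mul_sub, mul_one, ← hA, hAPr', sub_self]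
      have h2 : ∑ l : Fin (D + 1), z ^ (l : ℕ) • (P l.castSucc * (1 - Pr)) =
          ∑ m : Fin (D + 2), z ^ (m : ℕ) • (P m * (1 - Pr)) := by
        rw [Fin.sum_univ_castSucc (f := fun m : Fin (D + 2) => z ^ (m : ℕ) • (P m * (1 - Pr)))]
        simp [hlast0]
      rw [h1, h2, ← Finset.sum_add_distrib]
      refine Finset.sum_congr rfl fun m _ => ?_
      rw [← smul_add, ← mul_add, add_sub_cancel, mul_one]
    have hWunit : ∀ z : ℂ, ‖z‖ = 1 →
        (z • Pr + (1 - Pr))ᴴ * (z • Pr + (1 - Pr)) = 1 := by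
      intro z hz
      have hzz : (starRingEnd ℂ) z * z = 1 := by
        rw [mul_comm, Complex.mul_conj]
        norm_cast
        rw [Complex.normSq_eq_norm_sq, hz]; norm_num
      have hct : (z • Pr + (1 - Pr))ᴴ = (starRingEnd ℂ) z • Pr + (1 - Pr) := by
        rw [Matrix.conjTranspose_add, Matrix.conjTranspose_smul, hPrH,
          Matrix.conjTranspose_sub, Matrix.conjTranspose_one, hPrH]
        rfl
      rw [hct]
      simp only [add_mul, mul_add, Matrix.smul_mul, Matrix.mul_smul, smul_smul, hPrI,
        e1, e2, e3, smul_zero, add_zero, zero_add]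
      rw [mul_comm z, hzz, one_smul, add_sub_cancel]
    have hQunit : ∀ z : ℂ, ‖z‖ = 1 →
        (∑ l : Fin (D + 1), z ^ (l : ℕ) • Q l)ᴴ * (∑ l : Fin (D + 1), z ^ (l : ℕ) • Q l) = 1 := by
      intro z hz
      have hWW : (z • Pr + (1 - Pr)) * (z • Pr + (1 - Pr))ᴴ = 1 :=
        mul_eq_one_comm.mp (hWunit z hz)
      have hSW : (∑ l : Fin (D + 1), z ^ (l : ℕ) • Q l) =
          (∑ l : Fin (D + 2), z ^ (l : ℕ) • P l) * (z • Pr + (1 - Pr))ᴴ := by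
        rw [← hfact z, mul_assoc, hWW, mul_one]
      rw [hSW, Matrix.conjTranspose_mul, Matrix.conjTranspose_conjTranspose]
      rw [mul_assoc, ← mul_assoc ((∑ l : Fin (D + 2), z ^ (l : ℕ) • P l)ᴴ), hunit z hz,
        one_mul, hWW]
    obtain ⟨V₀, Pi', hV₀, hPi', heq⟩ := IH N Q hQunit
    refine ⟨V₀, Fin.snoc Pi' Pr, hV₀, ?_, ?_⟩
    · intro k
      refine Fin.lastCases ?_ ?_ k
      · rw [Fin.snoc_last]; exact ⟨hPrH, hPrI⟩
      · intro i
        rw [Fin.snoc_castSucc]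
        exact hPi' i
    · intro z hz
      have hofn : (List.ofFn (fun k : Fin (D + 1) =>
          z • (Fin.snoc Pi' Pr : Fin (D + 1) → Matrix (Fin N) (Fin N) ℂ) k +
            (1 - (Fin.snoc Pi' Pr : Fin (D + 1) → Matrix (Fin N) (Fin N) ℂ) k))) =
          (List.ofFn (fun k : Fin D => z • Pi' k + (1 - Pi' k))).concat (z • Pr + (1 - Pr)) := by
        rw [List.ofFn_succ']
        simp only [Fin.snoc_castSucc, Fin.snoc_last]
      rw [hofn, List.prod_concat, ← hfact z, heq z hz, mul_assoc]

end

/-- Factorization of matrix polynomials unitary on the unit circle: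
`P(z) = V₀ · ∏_{k=1}^{L} (Pr_k z + (I − Pr_k))` with `V₀` unitary and each `Pr_k`
an orthogonal projection. -/
theorem stmt_2 {N L : ℕ} (P : Fin (L + 1) → Matrix (Fin N) (Fin N) ℂ)
    (hunit : ∀ z : ℂ, ‖z‖ = 1 →
      (∑ l : Fin (L + 1), z ^ (l : ℕ) • P l)ᴴ * (∑ l : Fin (L + 1), z ^ (l : ℕ) • P l) = 1) :
    ∃ (V₀ : Matrix (Fin N) (Fin N) ℂ) (Pi : Fin L → Matrix (Fin N) (Fin N) ℂ),
      V₀ ∈ Matrix.unitaryGroup (Fin N) ℂ ∧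
      (∀ k, (Pi k)ᴴ = Pi k ∧ Pi k * Pi k = Pi k) ∧
      ∀ z : ℂ, ‖z‖ = 1 →
        ∑ l : Fin (L + 1), z ^ (l : ℕ) • P l =
          V₀ * (List.ofFn (fun k : Fin L => z • Pi k + (1 - Pi k))).prod := by
  exact main_induction L N P hunit
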